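/- arXiv:2212.08443 — 3 statements merged into one kernel-verified Lean document; each statement's English description precedes it below -/
import Mathlib

section
/- For every real α > 0 and every natural number n, the generalized Laguerre function L_n^α defined for t > 0 by the Rodrigues formula L_n^α(t) = (t^{-α} e^t / n!) · (d/dt)^n (e^{-t} t^{α+n}) satisfies the weighted integral identity ∫_0^∞ t^{α-1} e^{-t} (L_n^α(t))² dt = Γ(n+α+1)/(α · n!). -/
open Real MeasureTheory

/-- The generalized Laguerre function given by the Rodrigues formula
`L_n^α(t) = (t^{-α} e^t / n!) · (d/dt)^n (e^{-t} t^{α+n})`. -/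
noncomputable def lag (α : ℝ) (n : ℕ) (t : ℝ) : ℝ :=
  t ^ (-α) * Real.exp t / n.factorial *
    iteratedDeriv n (fun s : ℝ => Real.exp (-s) * s ^ (α + n)) t

section LagAux
open Finset

lemma pascal_sum (n : ℕ) (f : ℕ → ℝ) :
    ∑ l ∈ range (n+2), (-1:ℝ)^l * (n+1).choose l * f l
      = ∑ l ∈ range (n+1), (-1:ℝ)^l * n.choose l * (f l - f (l+1)) := by
  have h0 : ∑ l ∈ range (n+2), (-1:ℝ)^l * (n+1).choose l * f l
      = (∑ l ∈ range (n+1), (-1:ℝ)^(l+1) * ((n+1).choose (l+1)) * f (l+1)) + f 0 := by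
    rw [Finset.sum_range_succ']; norm_num
  have h2 : ∑ l ∈ range (n+2), (-1:ℝ)^l * n.choose l * f l
      = (∑ l ∈ range (n+1), (-1:ℝ)^(l+1) * (n.choose (l+1)) * f (l+1)) + f 0 := by
    rw [Finset.sum_range_succ']; norm_num
  have h3 : ∑ l ∈ range (n+2), (-1:ℝ)^l * n.choose l * f l
      = ∑ l ∈ range (n+1), (-1:ℝ)^l * n.choose l * f l := by
    rw [Finset.sum_range_succ, Nat.choose_succ_self]; norm_num
  have h1 : ∀ l, (((n+1).choose (l+1) : ℝ)) = n.choose l + n.choose (l+1) := by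
    intro l; rw [Nat.choose_succ_succ]; push_cast; ring
  calc ∑ l ∈ range (n+2), (-1:ℝ)^l * (n+1).choose l * f l
      = (∑ l ∈ range (n+1), ((-1:ℝ)^(l+1) * (n.choose l) * f (l+1)
          + (-1:ℝ)^(l+1) * (n.choose (l+1)) * f (l+1))) + f 0 := by
        rw [h0]; congr 1; apply Finset.sum_congr rfl; intro l _; rw [h1]; ring
    _ = (∑ l ∈ range (n+1), (-1:ℝ)^(l+1) * (n.choose l) * f (l+1))
          + ((∑ l ∈ range (n+1), (-1:ℝ)^(l+1) * (n.choose (l+1)) * f (l+1)) + f 0) := by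
        rw [Finset.sum_add_distrib]; ring
    _ = (∑ l ∈ range (n+1), (-1:ℝ)^(l+1) * (n.choose l) * f (l+1))
          + ∑ l ∈ range (n+1), (-1:ℝ)^l * n.choose l * f l := by rw [← h2, h3]
    _ = ∑ l ∈ range (n+1), (-1:ℝ)^l * n.choose l * (f l - f (l+1)) := by
        rw [← Finset.sum_add_distrib]; apply Finset.sum_congr rfl; intro l _; ring

noncomputable def g (m : ℕ) (x : ℝ) : ℝ := ∏ i ∈ range m, (x + i)

lemma g_diff (m : ℕ) (y : ℝ) : g (m+1) (y+1) - g (m+1) y = (m+1) * g m (y+1) := by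
  have h1 : g (m+1) y = y * g m (y+1) := by
    have e : ∏ i ∈ range m, (y + ((i+1 : ℕ):ℝ)) = ∏ i ∈ range m, ((y+1) + i) :=
      Finset.prod_congr rfl (fun i _ => by push_cast; ring)
    rw [g, Finset.prod_range_succ', e, g]
    push_cast; ring
  have h2 : g (m+1) (y+1) = g m (y+1) * (y+1+m) := by
    rw [g, Finset.prod_range_succ]; rfl
  rw [h1, h2]; ring

lemma alt_g (n : ℕ) : ∀ m < n, ∀ x : ℝ,
    ∑ l ∈ range (n+1), (-1:ℝ)^l * n.choose l * g m (x + l) = 0 := by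
  induction n with
  | zero => intro m hm; omega
  | succ n ih =>
    intro m hm x
    rw [show n + 1 + 1 = n + 2 from rfl, pascal_sum n (fun l => g m (x + l))]
    match m with
    | 0 =>
      simp [g]
    | m + 1 =>
      have hsum : ∀ l ∈ range (n+1), (-1:ℝ)^l * n.choose l * (g (m+1) (x + l) - g (m+1) (x + ((l+1:ℕ):ℝ)))
          = -((m:ℝ)+1) * ((-1:ℝ)^l * n.choose l * g m ((x+1) + l)) := by
        intro l _
        have hd := g_diff m (x + l)
        have e1 : x + ((l+1:ℕ):ℝ) = (x + (l:ℝ)) + 1 := by push_cast; ring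
        have e2 : (x + (l:ℝ)) + 1 = (x+1) + (l:ℝ) := by ring
        rw [e1]
        rw [e2] at hd ⊢
        linear_combination (-((-1:ℝ)^l * (n.choose l : ℝ))) * hd
      rw [Finset.sum_congr rfl hsum, ← Finset.mul_sum, ih m (by omega) (x+1)]
      ring

lemma alt_inv (n : ℕ) : ∀ α : ℝ, 0 < α →
    ∑ l ∈ range (n+1), (-1:ℝ)^l * n.choose l / (α + l) =
      n.factorial / ∏ j ∈ range (n+1), (α + j) := by
  induction n with
  | zero => intro α hα; simp
  | succ n ih =>
    intro α hα
    have key : ∑ l ∈ range (n+2), (-1:ℝ)^l * (n+1).choose l * (fun l : ℕ => 1 / (α + l)) l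
        = ∑ l ∈ range (n+1), (-1:ℝ)^l * n.choose l * ((1:ℝ) / (α + l) - 1 / (α + (l+1 : ℕ))) :=
      pascal_sum n _
    have hM : (0:ℝ) < ∏ j ∈ range n, (α + 1 + j) := by
      apply Finset.prod_pos; intro j _; positivity
    set M := ∏ j ∈ range n, (α + 1 + j) with hMdef
    have hA : ∏ j ∈ range (n+1), (α + j) = α * M := by
      rw [Finset.prod_range_succ']
      simp only [Nat.cast_zero, add_zero, mul_comm]
      congr 1
      apply Finset.prod_congr rfl; intro j _; push_cast; ring
    have hB : ∏ j ∈ range (n+1), (α + 1 + j) = M * (α + 1 + n) := Finset.prod_range_succ _ _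
    have hsplit : ∑ l ∈ range (n+1), (-1:ℝ)^l * n.choose l * ((1:ℝ) / (α + l) - 1 / (α + (l+1 : ℕ)))
        = (∑ l ∈ range (n+1), (-1:ℝ)^l * n.choose l / (α + l))
          - ∑ l ∈ range (n+1), (-1:ℝ)^l * n.choose l / ((α+1) + l) := by
      rw [← Finset.sum_sub_distrib]
      apply Finset.sum_congr rfl; intro l _; push_cast; ring
    have hC : ∏ j ∈ range (n+2), (α + j) = α * M * (α + 1 + n) := by
      rw [Finset.prod_range_succ, hA]; push_cast; ring
    calc ∑ l ∈ range (n+1+1), (-1:ℝ)^l * (n+1).choose l / (α + l)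
        = ∑ l ∈ range (n+2), (-1:ℝ)^l * (n+1).choose l * (fun l : ℕ => 1 / (α + l)) l := by
          apply Finset.sum_congr rfl; intro l _; simp; ring
      _ = (∑ l ∈ range (n+1), (-1:ℝ)^l * n.choose l / (α + l))
          - ∑ l ∈ range (n+1), (-1:ℝ)^l * n.choose l / ((α+1) + l) := by rw [key, hsplit]
      _ = n.factorial / (α * M) - n.factorial / (M * (α + 1 + n)) := by
          rw [ih α hα, ih (α+1) (by linarith), hA, hB]
      _ = (n+1).factorial / ∏ j ∈ range (n+2), (α + j) := by
          rw [hC, Nat.factorial_succ]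
          have h1 : α ≠ 0 := ne_of_gt hα
          have h2 : M ≠ 0 := ne_of_gt hM
          have h3 : α + 1 + n ≠ 0 := by positivity
          field_simp
          push_cast; ring

noncomputable def aco (β : ℝ) (m k : ℕ) : ℝ :=
  (-1:ℝ)^(m-k) * m.choose k * ∏ j ∈ range k, (β - j)

lemma aco_rec (β : ℝ) (m k : ℕ) (hk : k ≤ m) :
    aco β (m+1) (k+1) + aco β m (k+1) = aco β m k * (β - k) := by
  have h1 : aco β (m+1) (k+1) = (-1:ℝ)^(m-k) * ((m.choose k : ℝ) + m.choose (k+1)) *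
      ∏ j ∈ range (k+1), (β - j) := by
    rw [aco, Nat.choose_succ_succ, Nat.succ_sub_succ]
    push_cast; ring
  have h2 : aco β m (k+1) = -((-1:ℝ)^(m-k)) * (m.choose (k+1) : ℝ) * ∏ j ∈ range (k+1), (β - j) := by
    rcases eq_or_lt_of_le hk with h | h
    · subst h; rw [aco, Nat.choose_succ_self]; simp
    · rw [aco]
      have : m - k = (m - (k+1)) + 1 := by omega
      rw [this, pow_succ]
      ring
  rw [h1, h2, aco, Finset.prod_range_succ]
  ring

lemma iter_deriv (β : ℝ) (m : ℕ) : ∀ t : ℝ, 0 < t →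
    iteratedDeriv m (fun s : ℝ => Real.exp (-s) * s ^ β) t
      = Real.exp (-t) * ∑ k ∈ range (m+1), aco β m k * t ^ (β - k) := by
  induction m with
  | zero =>
    intro t ht
    simp [aco]
  | succ m ih =>
    intro t ht
    rw [iteratedDeriv_succ]
    have hev : iteratedDeriv m (fun s : ℝ => Real.exp (-s) * s ^ β)
        =ᶠ[nhds t] fun t => Real.exp (-t) * ∑ k ∈ range (m+1), aco β m k * t ^ (β - k) := by
      filter_upwards [isOpen_Ioi.mem_nhds ht] with s hs
      exact ih s hs
    rw [hev.deriv_eq]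
    -- compute the derivative
    have hS : HasDerivAt (fun t : ℝ => ∑ k ∈ range (m+1), aco β m k * t ^ (β - k))
        (∑ k ∈ range (m+1), aco β m k * ((β - k) * t ^ (β - k - 1))) t := by
      apply HasDerivAt.fun_sum
      intro k _
      exact (Real.hasDerivAt_rpow_const (Or.inl (ne_of_gt ht))).const_mul _
    have hexp : HasDerivAt (fun t : ℝ => Real.exp (-t)) (-Real.exp (-t)) t := by
      have := (Real.hasDerivAt_exp (-t)).comp t (hasDerivAt_neg t)
      simpa [Function.comp_def] using this
    have hE : HasDerivAt (fun t : ℝ => Real.exp (-t) * ∑ k ∈ range (m+1), aco β m k * t ^ (β - k)) _ t := hexp.mul hS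
    rw [hE.deriv]
    -- now the algebraic identity
    have key : -Real.exp (-t) * (∑ k ∈ range (m+1), aco β m k * t ^ (β - k))
        + Real.exp (-t) * (∑ k ∈ range (m+1), aco β m k * ((β - k) * t ^ (β - k - 1)))
        = Real.exp (-t) * ∑ k ∈ range (m+1+1), aco β (m+1) k * t ^ (β - k) := by
      have e0 : ∑ k ∈ range (m+2), aco β (m+1) k * t ^ (β - k)
          + ∑ k ∈ range (m+2), aco β m k * t ^ (β - k)
          = ∑ k ∈ range (m+1), aco β m k * ((β - k) * t ^ (β - k - 1)) := by
        rw [← Finset.sum_add_distrib, Finset.sum_range_succ']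
        have hz : aco β (m+1) 0 * t ^ (β - (0:ℕ)) + aco β m 0 * t ^ (β - (0:ℕ)) = 0 := by
          simp [aco, pow_succ]
        rw [hz, add_zero]
        apply Finset.sum_congr rfl
        intro k hk
        rw [Finset.mem_range] at hk
        have hrec := aco_rec β m k (by omega)
        have hexp2 : t ^ (β - ((k+1:ℕ):ℝ)) = t ^ (β - k - 1) := by
          congr 1; push_cast; ring
        rw [hexp2]
        linear_combination t ^ (β - (k:ℝ) - 1) * hrec
      have e1 : ∑ k ∈ range (m+2), aco β m k * t ^ (β - k)
          = ∑ k ∈ range (m+1), aco β m k * t ^ (β - k) := by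
        rw [Finset.sum_range_succ, aco, Nat.choose_succ_self]
        norm_num
      rw [← e0, e1]
      ring
    rw [← key]

noncomputable def cco (α : ℝ) (n k : ℕ) : ℝ :=
  (-1:ℝ)^k * n.choose k * (∏ i ∈ range (n-k), (α + k + 1 + i)) / n.factorial

lemma prod_flip (α : ℝ) (n k : ℕ) (hk : k ≤ n) :
    ∏ j ∈ range (n-k), (α + n - j) = ∏ i ∈ range (n-k), (α + k + 1 + i) := by
  rw [← Finset.prod_range_reflect]
  apply Finset.prod_congr rfl
  intro j hj
  rw [Finset.mem_range] at hj
  have h1 : n - k - 1 - j = n - (k + 1 + j) := by omega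
  rw [h1, Nat.cast_sub (by omega)]
  push_cast
  ring

lemma lag_eq (α : ℝ) (n : ℕ) (t : ℝ) (ht : 0 < t) :
    lag α n t = ∑ k ∈ range (n+1), cco α n k * t ^ k := by
  rw [lag, iter_deriv (α + n) n t ht]
  have step1 : t ^ (-α) * Real.exp t / n.factorial *
      (Real.exp (-t) * ∑ k ∈ range (n+1), aco (α + n) n k * t ^ (α + n - k))
      = ∑ k ∈ range (n+1), aco (α + n) n k / n.factorial * t ^ ((n - k : ℕ)) := by
    rw [Finset.mul_sum, Finset.mul_sum]
    apply Finset.sum_congr rfl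
    intro k hk
    rw [Finset.mem_range] at hk
    have h1 : t ^ (-α) * t ^ (α + n - k) = t ^ ((n - k : ℕ)) := by
      rw [← Real.rpow_natCast t (n - k), ← Real.rpow_add ht]
      congr 1
      rw [Nat.cast_sub (by omega)]
      ring
    have h2 : Real.exp t * Real.exp (-t) = 1 := by
      rw [← Real.exp_add]; simp
    calc t ^ (-α) * Real.exp t / (n.factorial:ℝ) *
          (Real.exp (-t) * (aco (α + n) n k * t ^ (α + n - k)))
        = (Real.exp t * Real.exp (-t)) * (t ^ (-α) * t ^ (α + n - k)) *
            aco (α + n) n k / n.factorial := by ring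
      _ = aco (α + n) n k / n.factorial * t ^ ((n - k : ℕ)) := by rw [h1, h2]; ring
  rw [step1]
  rw [← Finset.sum_range_reflect]
  apply Finset.sum_congr rfl
  intro k hk
  rw [Finset.mem_range] at hk
  have hk' : k ≤ n := by omega
  have e1 : n + 1 - 1 - k = n - k := by omega
  rw [e1]
  have e2 : n - (n - k) = k := by omega
  rw [cco, aco, e2, Nat.choose_symm hk', prod_flip α n k hk']

lemma Gamma_prod (x : ℝ) (hx : 0 < x) (m : ℕ) :
    Real.Gamma (x + m) = Real.Gamma x * ∏ i ∈ range m, (x + i) := by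
  induction m with
  | zero => simp
  | succ m ih =>
    have h1 : x + ((m+1 : ℕ):ℝ) = (x + m) + 1 := by push_cast; ring
    rw [h1, Real.Gamma_add_one (by positivity), ih, Finset.prod_range_succ]
    ring

-- key1 : P_l * Γ(α+l+1) = Γ(α+n+1)
lemma key1 (α : ℝ) (hα : 0 < α) (n l : ℕ) (hl : l ≤ n) :
    (∏ i ∈ range (n-l), (α + l + 1 + i)) * Real.Gamma (α + l + 1)
      = Real.Gamma (α + n + 1) := by
  have := Gamma_prod (α + l + 1) (by positivity) (n - l)
  have e : α + (l:ℝ) + 1 + ((n - l : ℕ):ℝ) = α + n + 1 := by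
    rw [Nat.cast_sub hl]; ring
  rw [e] at this
  rw [this]; ring

lemma inner_pos (α : ℝ) (hα : 0 < α) (n k : ℕ) (hk1 : 1 ≤ k) (hk2 : k ≤ n) :
    ∑ l ∈ range (n+1), cco α n l * Real.Gamma (α + k + l) = 0 := by
  have hterm : ∀ l ∈ range (n+1), cco α n l * Real.Gamma (α + k + l)
      = (Real.Gamma (α + n + 1) / n.factorial) *
        ((-1:ℝ)^l * n.choose l * g (k-1) ((α+1) + l)) := by
    intro l hl
    rw [Finset.mem_range] at hl
    have hGk : Real.Gamma (α + k + l) = Real.Gamma (α + l + 1) * g (k-1) ((α+1) + l) := by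
      have := Gamma_prod (α + l + 1) (by positivity) (k - 1)
      have e : α + (l:ℝ) + 1 + ((k - 1 : ℕ):ℝ) = α + k + l := by
        rw [Nat.cast_sub hk1]; push_cast; ring
      rw [e] at this
      rw [this, g]
      congr 1
      apply Finset.prod_congr rfl; intro i _; ring
    rw [cco, hGk]
    have := key1 α hα n l (by omega)
    calc (-1:ℝ)^l * n.choose l * (∏ i ∈ range (n-l), (α + l + 1 + i)) / n.factorial *
          (Real.Gamma (α + l + 1) * g (k-1) ((α+1) + l))
        = ((∏ i ∈ range (n-l), (α + l + 1 + i)) * Real.Gamma (α + l + 1)) *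
            ((-1:ℝ)^l * n.choose l * g (k-1) ((α+1) + l)) / n.factorial := by ring
      _ = (Real.Gamma (α + n + 1) / n.factorial) *
            ((-1:ℝ)^l * n.choose l * g (k-1) ((α+1) + l)) := by rw [this]; ring
  rw [Finset.sum_congr rfl hterm, ← Finset.mul_sum, alt_g n (k-1) (by omega) (α+1)]
  ring

lemma inner_zero (α : ℝ) (hα : 0 < α) (n : ℕ) :
    ∑ l ∈ range (n+1), cco α n l * Real.Gamma (α + l) =
      Real.Gamma (α + n + 1) / ∏ j ∈ range (n+1), (α + j) := by
  have hterm : ∀ l ∈ range (n+1), cco α n l * Real.Gamma (α + l)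
      = (Real.Gamma (α + n + 1) / n.factorial) * ((-1:ℝ)^l * n.choose l / (α + l)) := by
    intro l hl
    rw [Finset.mem_range] at hl
    have hpos : (0:ℝ) < α + l := by positivity
    have hG : Real.Gamma (α + l) = Real.Gamma (α + l + 1) / (α + l) := by
      rw [Real.Gamma_add_one (ne_of_gt hpos)]
      field_simp
    rw [cco, hG]
    have hk := key1 α hα n l (by omega)
    field_simp
    calc (n.choose l : ℝ) * (∏ i ∈ range (n-l), (α + l + 1 + i)) * Real.Gamma (α + l + 1)
        = ((∏ i ∈ range (n-l), (α + l + 1 + i)) * Real.Gamma (α + l + 1)) *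
            (n.choose l : ℝ) := by ring
      _ = (n.choose l : ℝ) * Real.Gamma (α + n + 1) := by rw [hk]; ring
  rw [Finset.sum_congr rfl hterm, ← Finset.mul_sum, alt_inv n α hα]
  have hprodpos : (0:ℝ) < ∏ j ∈ range (n+1), (α + j) := by
    apply Finset.prod_pos; intro j _; positivity
  have hfac : (0:ℝ) < n.factorial := by positivity
  field_simp

theorem laguerre_weighted_integral_identity (α : ℝ) (hα : 0 < α) (n : ℕ) :
    ∫ t in Set.Ioi (0 : ℝ), t ^ (α - 1) * Real.exp (-t) * lag α n t ^ 2 =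
      Real.Gamma (n + α + 1) / (α * n.factorial) := by
  -- Step 1: rewrite integrand on Ioi 0
  have hpt : ∀ t ∈ Set.Ioi (0:ℝ), t ^ (α - 1) * Real.exp (-t) * lag α n t ^ 2
      = ∑ p ∈ range (n+1) ×ˢ range (n+1),
          (cco α n p.1 * cco α n p.2) * (Real.exp (-t) * t ^ (α + p.1 + p.2 - 1)) := by
    intro t ht
    rw [Set.mem_Ioi] at ht
    rw [lag_eq α n t ht, sq, Finset.sum_mul_sum, Finset.mul_sum, Finset.sum_product]
    apply Finset.sum_congr rfl
    intro k _
    rw [Finset.mul_sum]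
    apply Finset.sum_congr rfl
    intro l _
    have he : t ^ (α - 1) * (t ^ k * t ^ l) = t ^ (α + k + l - 1) := by
      rw [← pow_add, ← Real.rpow_natCast t (k + l), ← Real.rpow_add ht]
      congr 1
      push_cast; ring
    calc t ^ (α - 1) * Real.exp (-t) * (cco α n k * t ^ k * (cco α n l * t ^ l))
        = (cco α n k * cco α n l) * Real.exp (-t) * (t ^ (α-1) * (t ^ k * t ^ l)) := by
          ring
      _ = (cco α n k * cco α n l) * (Real.exp (-t) * t ^ (α + k + l - 1)) := by
          rw [he]; ring
  rw [MeasureTheory.setIntegral_congr_fun measurableSet_Ioi hpt]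
  -- Step 2: swap sum and integral
  have hintg : ∀ p ∈ range (n+1) ×ˢ range (n+1),
      IntegrableOn (fun t : ℝ => (cco α n p.1 * cco α n p.2) *
        (Real.exp (-t) * t ^ (α + p.1 + p.2 - 1))) (Set.Ioi 0) := by
    intro p _
    exact (Real.GammaIntegral_convergent (by positivity : (0:ℝ) < α + p.1 + p.2)).const_mul _
  rw [MeasureTheory.integral_finset_sum _ hintg]
  have hval : ∀ p ∈ range (n+1) ×ˢ range (n+1),
      ∫ t in Set.Ioi (0:ℝ), (cco α n p.1 * cco α n p.2) *
        (Real.exp (-t) * t ^ (α + p.1 + p.2 - 1))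
      = cco α n p.1 * (cco α n p.2 * Real.Gamma (α + p.1 + p.2)) := by
    intro p _
    rw [MeasureTheory.integral_const_mul, ← Real.Gamma_eq_integral (by positivity)]
    ring
  rw [Finset.sum_congr rfl hval, Finset.sum_product]
  -- Step 3: evaluate the double sum
  have hinner : ∀ k ∈ range (n+1),
      ∑ l ∈ range (n+1), cco α n k * (cco α n l * Real.Gamma (α + k + l))
      = cco α n k * ∑ l ∈ range (n+1), cco α n l * Real.Gamma (α + k + l) := by
    intro k _; rw [Finset.mul_sum]
  rw [Finset.sum_congr rfl hinner]
  rw [Finset.sum_range_succ']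
  have hzero : ∀ k ∈ range n,
      cco α n (k+1) * ∑ l ∈ range (n+1), cco α n l * Real.Gamma (α + (k+1:ℕ) + l) = 0 := by
    intro k hk
    rw [Finset.mem_range] at hk
    rw [inner_pos α hα n (k+1) (by omega) (by omega)]
    ring
  rw [Finset.sum_congr rfl hzero, Finset.sum_const_zero, zero_add]
  have h0 : cco α n 0 * ∑ l ∈ range (n+1), cco α n l * Real.Gamma (α + (0:ℕ) + l)
      = cco α n 0 * (Real.Gamma (α + n + 1) / ∏ j ∈ range (n+1), (α + j)) := by
    congr 1
    rw [← inner_zero α hα n]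
    apply Finset.sum_congr rfl
    intro l _
    norm_num
  rw [h0]
  -- final algebra
  have hM : (0:ℝ) < ∏ i ∈ range n, (α + 1 + i) := by
    apply Finset.prod_pos; intro j _; positivity
  have hc0 : cco α n 0 = (∏ i ∈ range n, (α + 1 + i)) / n.factorial := by
    rw [cco]
    norm_num
  have hA : ∏ j ∈ range (n+1), (α + j) = α * ∏ i ∈ range n, (α + 1 + i) := by
    rw [Finset.prod_range_succ']
    simp only [Nat.cast_zero, add_zero]
    rw [mul_comm]
    congr 1
    apply Finset.prod_congr rfl; intro j _; push_cast; ring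
  rw [hc0, hA]
  have hfac : (0:ℝ) < n.factorial := by positivity
  have e : α + (n:ℝ) + 1 = (n:ℝ) + α + 1 := by ring
  rw [e]
  field_simp

end LagAux
end

section
/- For every real α > 0 and every natural number n, the wavelet admissibility constant of the Daubechies–Paul mother wavelet ψ_n^α equals C_{ψ_n^α} = 2π ∫_0^∞ ξ^{-1} (ξ^{α/2} e^{-ξ} L_n^α(2ξ))² dξ = 2π Γ(n+α+1)/(2^α · n! · α); in particular the integral is finite, so ψ_n^α is admissible. -/
open Real MeasureTheory Finset

/-- The Fourier-side profile of the Daubechies–Paul mother wavelet: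
`(Fψ_n^α)(ξ) = ξ^{α/2} e^{-ξ} L_n^α(2ξ)` for `ξ > 0`. -/
noncomputable def dpProfile (α : ℝ) (n : ℕ) (ξ : ℝ) : ℝ :=
  ξ ^ (α / 2) * Real.exp (-ξ) * lag α n (2 * ξ)

namespace DPaux

/-- descending factorial product -/
noncomputable def dpf (x : ℝ) (k : ℕ) : ℝ := ∏ i ∈ Finset.range k, (x - i)
/-- ascending factorial product -/
noncomputable def afac (x : ℝ) (k : ℕ) : ℝ := ∏ i ∈ Finset.range k, (x + i)

lemma dpf_zero (x : ℝ) : dpf x 0 = 1 := by simp [dpf]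
lemma dpf_succ (x : ℝ) (k : ℕ) : dpf x (k+1) = dpf x k * (x - k) := prod_range_succ _ _
lemma afac_zero (x : ℝ) : afac x 0 = 1 := by simp [afac]
lemma afac_succ (x : ℝ) (k : ℕ) : afac x (k+1) = afac x k * (x + k) := prod_range_succ _ _
lemma afac_succ' (x : ℝ) (k : ℕ) : afac x (k+1) = afac (x+1) k * x := by
  rw [afac, Finset.prod_range_succ']
  simp [afac, add_assoc, add_comm (1:ℝ)]

lemma afac_pos {x : ℝ} (hx : 0 < x) (k : ℕ) : 0 < afac x k :=
  Finset.prod_pos fun i _ => by positivity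

lemma dpf_eq_afac : ∀ (m : ℕ) (y : ℝ), dpf y m = afac (y - m + 1) m := by
  intro m
  induction m with
  | zero => intro y; simp [dpf_zero, afac_zero]
  | succ m ih =>
    intro y
    have h : (y - (↑(m+1) : ℝ) + 1) = y - m := by push_cast; ring
    rw [dpf_succ, ih, h, afac_succ']

lemma Gamma_afac {x : ℝ} (hx : 0 < x) (m : ℕ) :
    Real.Gamma (x + m) = Real.Gamma x * afac x m := by
  induction m with
  | zero => simp [afac_zero]
  | succ m ih =>
    have h : x + ((m : ℝ) + 1) = (x + m) + 1 := by ring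
    have hxm : x + (m : ℝ) ≠ 0 := by positivity
    rw [show ((m+1 : ℕ) : ℝ) = (m : ℝ) + 1 by push_cast; ring, h,
      Real.Gamma_add_one hxm, ih, afac_succ]
    ring


lemma alt_inv : ∀ (n : ℕ) (x : ℝ), 0 < x →
    ∑ k ∈ Finset.range (n+1), (-1:ℝ)^k * (n.choose k : ℝ) / (x + k)
      = (n.factorial : ℝ) / afac x (n+1) := by
  intro n
  induction n with
  | zero => intro x hx; simp [afac_succ, afac_zero]
  | succ n ih =>
    intro x hx
    have key : ∑ k ∈ Finset.range (n+2), (-1:ℝ)^k * ((n+1).choose k : ℝ) / (x + k)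
        = (∑ k ∈ Finset.range (n+1), (-1:ℝ)^k * (n.choose k : ℝ) / (x + k))
          - ∑ k ∈ Finset.range (n+1), (-1:ℝ)^k * (n.choose k : ℝ) / ((x+1) + k) := by
      rw [Finset.sum_range_succ' (fun k => (-1:ℝ)^k * ((n+1).choose k : ℝ) / (x + k)) (n+1)]
      have h1 : ∀ i ∈ Finset.range (n+1),
          (-1:ℝ)^(i+1) * (((n+1).choose (i+1) : ℕ) : ℝ) / (x + ↑(i+1))
            = (-1:ℝ)^(i+1) * ((n.choose (i+1) : ℕ) : ℝ) / (x + ↑(i+1))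
              - (-1:ℝ)^i * ((n.choose i : ℕ) : ℝ) / ((x+1) + i) := by
        intro i _
        rw [Nat.choose_succ_succ']
        push_cast
        have : x + (↑i + 1) = x + 1 + ↑i := by ring
        rw [this]
        ring
      rw [Finset.sum_congr rfl h1, Finset.sum_sub_distrib]
      have h2 : (∑ i ∈ Finset.range (n+1), (-1:ℝ)^(i+1) * ((n.choose (i+1) : ℕ) : ℝ) / (x + ↑(i+1)))
            + (-1:ℝ)^0 * (((n+1).choose 0 : ℕ) : ℝ) / (x + (0:ℕ))
          = ∑ k ∈ Finset.range (n+2), (-1:ℝ)^k * (n.choose k : ℝ) / (x + k) := by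
        rw [Finset.sum_range_succ' (fun k => (-1:ℝ)^k * ((n.choose k : ℕ) : ℝ) / (x + k)) (n+1)]
        norm_num
      have h3 : ∑ k ∈ Finset.range (n+2), (-1:ℝ)^k * (n.choose k : ℝ) / (x + k)
          = ∑ k ∈ Finset.range (n+1), (-1:ℝ)^k * (n.choose k : ℝ) / (x + k) := by
        rw [Finset.sum_range_succ]
        simp [Nat.choose_succ_self]
      linarith [h2, h3]
    rw [key, ih x hx, ih (x+1) (by linarith)]
    have hx1 : afac x (n+2) = afac x (n+1) * (x + (n+1)) := by
      have := afac_succ x (n+1); push_cast at this ⊢; linarith [this]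
    have hx2 : afac x (n+2) = afac (x+1) (n+1) * x := afac_succ' x (n+1)
    have p1 : 0 < afac x (n+1) := afac_pos hx _
    have p2 : 0 < afac (x+1) (n+1) := afac_pos (by linarith) _
    have p3 : 0 < afac x (n+2) := afac_pos hx _
    rw [div_sub_div _ _ p1.ne' p2.ne', div_eq_div_iff (by positivity) p3.ne',
      Nat.factorial_succ]
    push_cast
    linear_combination ((n.factorial : ℝ) * afac (x+1) (n+1)) * hx1
      - ((n.factorial : ℝ) * afac x (n+1)) * hx2

lemma alt_poly : ∀ (n : ℕ) (p : Polynomial ℝ), p.natDegree < n →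
    ∑ k ∈ Finset.range (n+1), (-1:ℝ)^k * (n.choose k : ℝ) * p.eval (k : ℝ) = 0 := by
  intro n
  induction n with
  | zero => intro p hp; omega
  | succ n ih =>
    intro p hp
    set q : Polynomial ℝ := p - p.comp (Polynomial.X + Polynomial.C 1) with hq
    have hqeval : ∀ k : ℕ, q.eval (k : ℝ) = p.eval (k : ℝ) - p.eval ((k : ℝ) + 1) := by
      intro k
      simp [hq, Polynomial.eval_comp]
    have key : ∑ k ∈ Finset.range (n+2), (-1:ℝ)^k * ((n+1).choose k : ℝ) * p.eval (k : ℝ)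
        = ∑ k ∈ Finset.range (n+1), (-1:ℝ)^k * (n.choose k : ℝ) * q.eval (k : ℝ) := by
      rw [Finset.sum_range_succ' (fun k => (-1:ℝ)^k * (((n+1).choose k : ℕ) : ℝ) * p.eval (k : ℝ)) (n+1)]
      have h1 : ∀ i ∈ Finset.range (n+1),
          (-1:ℝ)^(i+1) * (((n+1).choose (i+1) : ℕ) : ℝ) * p.eval ((↑(i+1) : ℝ))
            = (-1:ℝ)^(i+1) * ((n.choose (i+1) : ℕ) : ℝ) * p.eval ((↑(i+1) : ℝ))
              - (-1:ℝ)^i * ((n.choose i : ℕ) : ℝ) * p.eval ((i : ℝ) + 1) := by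
        intro i _
        rw [Nat.choose_succ_succ']
        push_cast
        ring
      rw [Finset.sum_congr rfl h1, Finset.sum_sub_distrib]
      have h2 : (∑ i ∈ Finset.range (n+1), (-1:ℝ)^(i+1) * ((n.choose (i+1) : ℕ) : ℝ) * p.eval ((↑(i+1):ℝ)))
            + (-1:ℝ)^0 * (((n+1).choose 0 : ℕ) : ℝ) * p.eval ((0:ℕ) : ℝ)
          = ∑ k ∈ Finset.range (n+2), (-1:ℝ)^k * (n.choose k : ℝ) * p.eval (k : ℝ) := by
        rw [Finset.sum_range_succ' (fun k => (-1:ℝ)^k * ((n.choose k : ℕ) : ℝ) * p.eval (k : ℝ)) (n+1)]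
        norm_num
      have h3 : ∑ k ∈ Finset.range (n+2), (-1:ℝ)^k * (n.choose k : ℝ) * p.eval (k : ℝ)
          = ∑ k ∈ Finset.range (n+1), (-1:ℝ)^k * (n.choose k : ℝ) * p.eval (k : ℝ) := by
        rw [Finset.sum_range_succ]
        simp [Nat.choose_succ_self]
      have h4 : ∀ k ∈ Finset.range (n+1), (-1:ℝ)^k * (n.choose k : ℝ) * q.eval (k : ℝ)
          = (-1:ℝ)^k * (n.choose k : ℝ) * p.eval (k : ℝ)
            - (-1:ℝ)^k * (n.choose k : ℝ) * p.eval ((k : ℝ) + 1) := by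
        intro k _; rw [hqeval]; ring
      rw [Finset.sum_congr rfl h4, Finset.sum_sub_distrib, ← h3, ← h2]
      ring
    rw [key]
    by_cases hq0 : q = 0
    · simp [hq0]
    · apply ih
      have hp0 : p ≠ 0 := by
        intro h; apply hq0; simp [hq, h]
      have hdX : (Polynomial.X + Polynomial.C (1:ℝ)).natDegree = 1 :=
        Polynomial.natDegree_X_add_C 1
      have hlc : (p.comp (Polynomial.X + Polynomial.C (1:ℝ))).leadingCoeff = p.leadingCoeff := by
        rw [Polynomial.leadingCoeff_comp (by rw [hdX]; norm_num),
          Polynomial.leadingCoeff_X_add_C, one_pow, mul_one]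
      have hc0 : p.comp (Polynomial.X + Polynomial.C (1:ℝ)) ≠ 0 := by
        intro h
        apply hp0
        have := hlc
        rw [h, Polynomial.leadingCoeff_zero] at this
        exact Polynomial.leadingCoeff_eq_zero.mp this.symm
      have hdeg : (p.comp (Polynomial.X + Polynomial.C (1:ℝ))).degree = p.degree := by
        rw [Polynomial.degree_eq_natDegree hc0, Polynomial.degree_eq_natDegree hp0,
          Polynomial.natDegree_comp, hdX, mul_one]
      have hlt : q.degree < p.degree :=
        Polynomial.degree_sub_lt hdeg.symm hp0 hlc.symm
      rw [Polynomial.degree_eq_natDegree hp0] at hlt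
      have : q.natDegree < p.natDegree :=
        (Polynomial.natDegree_lt_iff_degree_lt hq0).mpr hlt
      omega


lemma sum_step (β : ℝ) (m : ℕ) (E : ℕ → ℝ) :
    ∑ k ∈ Finset.range (m+1),
        ((-1:ℝ)^(m+k) * (m.choose k : ℝ) * dpf β k) * (-(E k) + (β - k) * E (k+1))
      = ∑ k ∈ Finset.range (m+2),
        ((-1:ℝ)^(m+1+k) * ((m+1).choose k : ℝ) * dpf β k) * E k := by
  have split : ∀ k ∈ Finset.range (m+1),
      ((-1:ℝ)^(m+k) * (m.choose k : ℝ) * dpf β k) * (-(E k) + (β - k) * E (k+1))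
        = (-((-1:ℝ)^(m+k) * (m.choose k : ℝ) * dpf β k) * E k)
          + ((-1:ℝ)^(m+k) * (m.choose k : ℝ) * dpf β (k+1)) * E (k+1) := by
    intro k _
    rw [dpf_succ]
    ring
  rw [Finset.sum_congr rfl split, Finset.sum_add_distrib,
    Finset.sum_range_succ' (fun k => -((-1:ℝ)^(m+k) * (m.choose k : ℝ) * dpf β k) * E k) m,
    Finset.sum_range_succ' (fun k => ((-1:ℝ)^(m+1+k) * ((m+1).choose k : ℝ) * dpf β k) * E k) (m+1)]
  have extend : ∑ j ∈ Finset.range m, -((-1:ℝ)^(m+(j+1)) * (m.choose (j+1) : ℝ) * dpf β (j+1)) * E (j+1)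
      = ∑ j ∈ Finset.range (m+1), -((-1:ℝ)^(m+(j+1)) * (m.choose (j+1) : ℝ) * dpf β (j+1)) * E (j+1) := by
    rw [Finset.sum_range_succ]
    simp [Nat.choose_succ_self]
  rw [extend, add_right_comm, ← Finset.sum_add_distrib]
  have per : ∀ j ∈ Finset.range (m+1),
      (-((-1:ℝ)^(m+(j+1)) * (m.choose (j+1) : ℝ) * dpf β (j+1)) * E (j+1)
        + ((-1:ℝ)^(m+j) * (m.choose j : ℝ) * dpf β (j+1)) * E (j+1))
      = ((-1:ℝ)^(m+1+(j+1)) * (((m+1).choose (j+1)) : ℝ) * dpf β (j+1)) * E (j+1) := by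
    intro j _
    rw [Nat.choose_succ_succ]
    have e1 : (-1:ℝ)^(m+1+(j+1)) = (-1:ℝ)^(m+j) := by
      rw [show m+1+(j+1) = (m+j)+2 by ring, pow_add]
      norm_num
    have e2 : (-1:ℝ)^(m+(j+1)) = -(-1:ℝ)^(m+j) := by
      rw [show m+(j+1) = (m+j)+1 by ring, pow_succ]
      ring
    rw [e1, e2]
    push_cast
    ring
  rw [Finset.sum_congr rfl per]
  have last : -((-1:ℝ)^(m+0) * (m.choose 0 : ℝ) * dpf β 0) * E 0
      = ((-1:ℝ)^(m+1+0) * (((m+1).choose 0) : ℝ) * dpf β 0) * E 0 := by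
    simp [pow_succ]
  rw [last]


lemma iter_deriv (β : ℝ) : ∀ (m : ℕ) {t : ℝ}, 0 < t →
    iteratedDeriv m (fun s : ℝ => Real.exp (-s) * s ^ β) t
      = ∑ k ∈ Finset.range (m+1),
          ((-1:ℝ)^(m+k) * (m.choose k : ℝ) * dpf β k) * (Real.exp (-t) * t ^ (β - k)) := by
  intro m
  induction m with
  | zero =>
    intro t ht
    simp [dpf_zero]
  | succ m ih =>
    intro t ht
    rw [iteratedDeriv_succ]
    have hev : iteratedDeriv m (fun s : ℝ => Real.exp (-s) * s ^ β)
        =ᶠ[nhds t] fun u => ∑ k ∈ Finset.range (m+1),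
          ((-1:ℝ)^(m+k) * (m.choose k : ℝ) * dpf β k) * (Real.exp (-u) * u ^ (β - k)) :=
      Filter.eventuallyEq_of_mem (isOpen_Ioi.mem_nhds ht) (fun u hu => ih hu)
    rw [hev.deriv_eq]
    have hterm : ∀ k : ℕ, HasDerivAt (fun u : ℝ => Real.exp (-u) * u ^ (β - k))
        (-(Real.exp (-t) * t ^ (β - k)) + (β - k) * (Real.exp (-t) * t ^ (β - (k+1:ℕ)))) t := by
      intro k
      have h1 : HasDerivAt (fun u : ℝ => Real.exp (-u)) (-Real.exp (-t)) t := by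
        simpa using (hasDerivAt_neg t).exp
      have h2 : HasDerivAt (fun u : ℝ => u ^ (β - k)) ((β - k) * t ^ (β - k - 1)) t :=
        Real.hasDerivAt_rpow_const (Or.inl ht.ne')
      have := h1.fun_mul h2
      have hc : β - (↑(k+1) : ℝ) = β - ↑k - 1 := by push_cast; ring
      rw [hc]
      exact this.congr_deriv (by ring)
    have hsum : HasDerivAt (fun u => ∑ k ∈ Finset.range (m+1),
        ((-1:ℝ)^(m+k) * (m.choose k : ℝ) * dpf β k) * (Real.exp (-u) * u ^ (β - k)))
        (∑ k ∈ Finset.range (m+1), ((-1:ℝ)^(m+k) * (m.choose k : ℝ) * dpf β k)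
          * (-(Real.exp (-t) * t ^ (β - k)) + (β - k) * (Real.exp (-t) * t ^ (β - (k+1:ℕ))))) t :=
      HasDerivAt.fun_sum (fun k _ => ((hterm k).const_mul _))
    rw [hsum.deriv]
    exact sum_step β m (fun k => Real.exp (-t) * t ^ (β - k))


noncomputable def lcoef (α : ℝ) (n : ℕ) (j : ℕ) : ℝ :=
  (-1:ℝ)^j * (n.choose j : ℝ) * dpf (α + n) (n - j) / n.factorial

lemma lag_eq (α : ℝ) (n : ℕ) {t : ℝ} (ht : 0 < t) :
    lag α n t = ∑ j ∈ Finset.range (n+1), lcoef α n j * t ^ j := by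
  rw [lag, iter_deriv (α + n) n ht, Finset.mul_sum]
  rw [← Finset.sum_range_reflect (fun j => lcoef α n j * t ^ j) (n+1)]
  refine Finset.sum_congr rfl (fun k hk => ?_)
  have hk' : k ≤ n := by simpa using Nat.lt_succ_iff.mp (Finset.mem_range.mp hk)
  have h1 : n + 1 - 1 - k = n - k := by omega
  rw [h1]
  have h2 : n - (n - k) = k := by omega
  rw [lcoef, h2]
  have hsign : (-1:ℝ)^(n-k) = (-1:ℝ)^(n+k) := by
    rw [show n+k = (n-k) + 2*k by omega, pow_add, pow_mul]
    norm_num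
  have hch : (n.choose (n-k) : ℝ) = (n.choose k : ℝ) := by
    rw [Nat.choose_symm hk']
  have hpow : t ^ (-α) * (Real.exp t * (Real.exp (-t) * t ^ (α + ↑n - ↑k)))
      = t ^ ((n - k : ℕ) : ℝ) := by
    have he : Real.exp t * (Real.exp (-t) * t ^ (α + ↑n - ↑k)) = t ^ (α + ↑n - ↑k) := by
      rw [← mul_assoc, ← Real.exp_add]
      simp
    rw [he, ← Real.rpow_add ht]
    congr 1
    push_cast [Nat.cast_sub hk']
    ring
  have hpow2 : t ^ ((n - k : ℕ) : ℝ) = t ^ (n - k) := Real.rpow_natCast t (n-k)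
  rw [hsign, hch]
  field_simp
  rw [← hpow2, ← hpow]
  ring


lemma dpf_gamma {α : ℝ} (hα : 0 < α) {n k : ℕ} (hk : k ≤ n) :
    dpf (α + n) (n - k) * Real.Gamma (α + k + 1) = Real.Gamma (α + n + 1) := by
  rw [dpf_eq_afac]
  have h1 : α + ↑n - ↑(n - k) + 1 = α + k + 1 := by
    push_cast [Nat.cast_sub hk]; ring
  rw [h1, mul_comm, ← Gamma_afac (by positivity)]
  congr 1
  push_cast [Nat.cast_sub hk]; ring

lemma inner0 {α : ℝ} (hα : 0 < α) (n : ℕ) :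
    ∑ k ∈ Finset.range (n+1), lcoef α n k * Real.Gamma (α + k) = Real.Gamma α := by
  have per : ∀ k ∈ Finset.range (n+1), lcoef α n k * Real.Gamma (α + k)
      = (Real.Gamma (α + n + 1) / n.factorial) * ((-1:ℝ)^k * (n.choose k : ℝ) / (α + k)) := by
    intro k hk
    have hk' : k ≤ n := Nat.lt_succ_iff.mp (Finset.mem_range.mp hk)
    have hg : Real.Gamma (α + k + 1) = (α + k) * Real.Gamma (α + k) :=
      Real.Gamma_add_one (by positivity)
    have hd := dpf_gamma hα hk'
    have hαk : (α + (k:ℝ)) ≠ 0 := by positivity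
    have hdd : dpf (α + ↑n) (n - k) * Real.Gamma (α + ↑k) = Real.Gamma (α + ↑n + 1) / (α + ↑k) := by
      rw [eq_div_iff hαk]
      linear_combination hd - dpf (α + ↑n) (n - k) * hg
    calc lcoef α n k * Real.Gamma (α + ↑k)
        = ((-1:ℝ)^k * (n.choose k : ℝ) / n.factorial)
            * (dpf (α + ↑n) (n - k) * Real.Gamma (α + ↑k)) := by rw [lcoef]; ring
      _ = ((-1:ℝ)^k * (n.choose k : ℝ) / n.factorial) * (Real.Gamma (α + ↑n + 1) / (α + ↑k)) := by
          rw [hdd]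
      _ = (Real.Gamma (α + ↑n + 1) / n.factorial) * ((-1:ℝ)^k * (n.choose k : ℝ) / (α + ↑k)) := by
          ring
  rw [Finset.sum_congr rfl per, ← Finset.mul_sum, alt_inv n α hα]
  have h2 : Real.Gamma α * afac α (n+1) = Real.Gamma (α + n + 1) := by
    rw [← Gamma_afac hα]
    congr 1
    push_cast; ring
  have hnf : (n.factorial : ℝ) ≠ 0 := by positivity
  have hpos : 0 < afac α (n+1) := afac_pos hα _
  rw [← h2]
  field_simp

lemma innerj {α : ℝ} (hα : 0 < α) {n j : ℕ} (hj : 1 ≤ j) (hjn : j ≤ n) :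
    ∑ k ∈ Finset.range (n+1), lcoef α n k * Real.Gamma (α + j + k) = 0 := by
  set p : Polynomial ℝ := ∏ i ∈ Finset.range (j-1), (Polynomial.X + Polynomial.C (α+1+i)) with hp
  have hpeval : ∀ k : ℕ, p.eval (k : ℝ) = afac (α + k + 1) (j-1) := by
    intro k
    rw [hp, Polynomial.eval_prod, afac]
    refine Finset.prod_congr rfl (fun i _ => ?_)
    simp
    ring
  have per : ∀ k ∈ Finset.range (n+1), lcoef α n k * Real.Gamma (α + j + k)
      = (Real.Gamma (α + n + 1) / n.factorial) * ((-1:ℝ)^k * (n.choose k : ℝ) * p.eval (k:ℝ)) := by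
    intro k hk
    have hk' : k ≤ n := Nat.lt_succ_iff.mp (Finset.mem_range.mp hk)
    have hg : Real.Gamma (α + j + k) = Real.Gamma (α + k + 1) * afac (α + k + 1) (j-1) := by
      rw [← Gamma_afac (by positivity)]
      congr 1
      push_cast [Nat.cast_sub hj]
      ring
    have hd := dpf_gamma hα hk'
    calc lcoef α n k * Real.Gamma (α + ↑j + ↑k)
        = ((-1:ℝ)^k * (n.choose k : ℝ) / n.factorial)
            * (dpf (α + ↑n) (n - k) * Real.Gamma (α + ↑k + 1)) * afac (α + ↑k + 1) (j-1) := by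
          rw [lcoef, hg]; ring
      _ = ((-1:ℝ)^k * (n.choose k : ℝ) / n.factorial) * Real.Gamma (α + ↑n + 1)
            * afac (α + ↑k + 1) (j-1) := by rw [hd]
      _ = (Real.Gamma (α + ↑n + 1) / n.factorial)
            * ((-1:ℝ)^k * (n.choose k : ℝ) * p.eval (k:ℝ)) := by rw [hpeval]; ring
  rw [Finset.sum_congr rfl per, ← Finset.mul_sum]
  have hdeg : p.natDegree < n := by
    have : p.natDegree = j - 1 := by
      calc p.natDegree
          = ∑ i ∈ Finset.range (j-1), (Polynomial.X + Polynomial.C (α+1+(i:ℝ))).natDegree :=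
            Polynomial.natDegree_prod _ _ (fun i _ => Polynomial.X_add_C_ne_zero _)
        _ = ∑ _i ∈ Finset.range (j-1), 1 :=
            Finset.sum_congr rfl (fun i _ => Polynomial.natDegree_X_add_C _)
        _ = j - 1 := by simp
    omega
  rw [alt_poly n p hdeg, mul_zero]

lemma keysum {α : ℝ} (hα : 0 < α) (n : ℕ) :
    ∑ j ∈ Finset.range (n+1), ∑ k ∈ Finset.range (n+1),
        lcoef α n j * lcoef α n k * Real.Gamma (α + j + k)
      = Real.Gamma (α + n + 1) / (n.factorial * α) := by
  have per : ∀ j ∈ Finset.range (n+1),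
      ∑ k ∈ Finset.range (n+1), lcoef α n j * lcoef α n k * Real.Gamma (α + j + k)
        = lcoef α n j * ∑ k ∈ Finset.range (n+1), lcoef α n k * Real.Gamma (α + j + k) := by
    intro j _
    rw [Finset.mul_sum]
    exact Finset.sum_congr rfl (fun k _ => by ring)
  rw [Finset.sum_congr rfl per]
  rw [Finset.sum_eq_single 0]
  · have hsum0 : ∑ k ∈ Finset.range (n+1), lcoef α n k * Real.Gamma (α + (0:ℕ) + k)
        = Real.Gamma α := by
      refine Eq.trans (Finset.sum_congr rfl (fun k _ => ?_)) (inner0 hα n)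
      norm_num
    rw [hsum0]
    have hl0 : lcoef α n 0 = afac (α+1) n / n.factorial := by
      rw [lcoef]
      simp only [Nat.sub_zero]
      rw [dpf_eq_afac]
      have harg : α + ↑n - ↑n + 1 = α + 1 := by ring
      rw [harg]
      norm_num
    rw [hl0]
    have h2 : Real.Gamma (α + 1) * afac (α+1) n = Real.Gamma (α + n + 1) := by
      rw [← Gamma_afac (by positivity)]
      congr 1
      ring
    have h3 : Real.Gamma (α + 1) = α * Real.Gamma α := Real.Gamma_add_one hα.ne'
    have hnf : (n.factorial : ℝ) ≠ 0 := by positivity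
    rw [div_mul_eq_mul_div, div_eq_div_iff hnf (by positivity)]
    linear_combination (n.factorial : ℝ) * h2 - ((n.factorial : ℝ) * afac (α+1) n) * h3
  · intro j hjmem hj0
    have hj1 : 1 ≤ j := Nat.one_le_iff_ne_zero.mpr hj0
    have hjn : j ≤ n := Nat.lt_succ_iff.mp (Finset.mem_range.mp hjmem)
    rw [innerj hα hj1 hjn, mul_zero]
  · intro h
    exact absurd (Finset.mem_range.mpr (Nat.succ_pos n)) h


lemma base_integrable {s : ℝ} (hs : 0 < s) :
    IntegrableOn (fun ξ : ℝ => ξ ^ (s - 1) * Real.exp (-(2 * ξ))) (Set.Ioi 0) := by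
  have h := integrableOn_rpow_mul_exp_neg_mul_rpow (p := 1) (s := s - 1) (b := 2)
    (by linarith) one_pos two_pos
  refine h.congr_fun (fun x _ => ?_) measurableSet_Ioi
  simp only [Real.rpow_one]
  ring_nf

lemma base_integral {s : ℝ} (hs : 0 < s) :
    ∫ ξ in Set.Ioi (0:ℝ), ξ ^ (s - 1) * Real.exp (-(2 * ξ))
      = (1/2:ℝ) ^ s * Real.Gamma s :=
  Real.integral_rpow_mul_exp_neg_mul_Ioi hs two_pos

noncomputable def sterm (α : ℝ) (n j k : ℕ) (ξ : ℝ) : ℝ :=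
  (lcoef α n j * 2^j) * (lcoef α n k * 2^k) * (ξ ^ (α + j + k - 1) * Real.exp (-(2 * ξ)))

lemma integrand_eq (α : ℝ) (n : ℕ) {ξ : ℝ} (hξ : ξ ∈ Set.Ioi (0:ℝ)) :
    ξ⁻¹ * dpProfile α n ξ ^ 2
      = ∑ j ∈ Finset.range (n+1), ∑ k ∈ Finset.range (n+1), sterm α n j k ξ := by
  have hξ0 : 0 < ξ := hξ
  have h2ξ : 0 < 2 * ξ := by linarith
  have hlag : lag α n (2*ξ) = ∑ j ∈ Finset.range (n+1), (lcoef α n j * 2^j) * ξ^j := by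
    rw [lag_eq α n h2ξ]
    exact Finset.sum_congr rfl (fun j _ => by rw [mul_pow]; ring)
  have hA : (ξ ^ (α/2))^2 = ξ ^ α := by
    rw [← Real.rpow_natCast (ξ ^ (α/2)) 2, ← Real.rpow_mul hξ0.le]
    norm_num
  have hE : (Real.exp (-ξ))^2 = Real.exp (-(2*ξ)) := by
    rw [← Real.exp_nat_mul]
    norm_num
  have key : ξ⁻¹ * (ξ ^ (α/2) * Real.exp (-ξ)
        * (∑ j ∈ Finset.range (n+1), (lcoef α n j * 2^j) * ξ^j))^2
      = (ξ^α * Real.exp (-(2*ξ)) * ξ⁻¹) *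
          ((∑ j ∈ Finset.range (n+1), (lcoef α n j * 2^j) * ξ^j) *
           (∑ k ∈ Finset.range (n+1), (lcoef α n k * 2^k) * ξ^k)) := by
    rw [← hA, ← hE]; ring
  rw [dpProfile, hlag, key, Finset.sum_mul_sum, Finset.mul_sum]
  refine Finset.sum_congr rfl (fun j _ => ?_)
  rw [Finset.mul_sum]
  refine Finset.sum_congr rfl (fun k _ => ?_)
  simp only [sterm]
  have hmerge : ξ ^ (α + ↑j + ↑k - 1) = ξ^α * ξ^j * ξ^k * ξ⁻¹ := by
    rw [show α + ↑j + ↑k - 1 = α + ↑j + ((k:ℝ) + (-1)) by ring,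
      Real.rpow_add hξ0, Real.rpow_add hξ0, Real.rpow_add hξ0,
      Real.rpow_natCast, Real.rpow_natCast, Real.rpow_neg_one]
    ring
  rw [hmerge]
  ring

lemma sterm_integrable (α : ℝ) (hα : 0 < α) (n j k : ℕ) :
    IntegrableOn (sterm α n j k) (Set.Ioi (0:ℝ)) := by
  have hs : (0:ℝ) < α + j + k := by positivity
  exact (base_integrable hs).const_mul _

lemma sterm_integral (α : ℝ) (hα : 0 < α) (n j k : ℕ) :
    ∫ ξ in Set.Ioi (0:ℝ), sterm α n j k ξ
      = (lcoef α n j * 2^j) * (lcoef α n k * 2^k)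
        * ((1/2:ℝ) ^ (α + j + k) * Real.Gamma (α + j + k)) := by
  have hs : (0:ℝ) < α + j + k := by positivity
  simp only [sterm]
  rw [MeasureTheory.integral_const_mul, base_integral hs]

end DPaux

open DPaux in
/-- The Daubechies–Paul wavelet is admissible, with admissibility constant
`C_{ψ_n^α} = 2π Γ(n+α+1) / (2^α n! α)`. -/
theorem dp_admissibility_constant (α : ℝ) (hα : 0 < α) (n : ℕ) :
    IntegrableOn (fun ξ : ℝ => ξ⁻¹ * dpProfile α n ξ ^ 2) (Set.Ioi (0 : ℝ)) ∧
      2 * π * ∫ ξ in Set.Ioi (0 : ℝ), ξ⁻¹ * dpProfile α n ξ ^ 2 =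
        2 * π * Real.Gamma (n + α + 1) / ((2 : ℝ) ^ α * n.factorial * α) := by
  have hsumInt : IntegrableOn (fun ξ : ℝ => ∑ j ∈ Finset.range (n+1),
      ∑ k ∈ Finset.range (n+1), sterm α n j k ξ) (Set.Ioi (0:ℝ)) :=
    integrable_finset_sum _ (fun j _ => integrable_finset_sum _
      (fun k _ => sterm_integrable α hα n j k))
  have hToSum : Set.EqOn (fun ξ : ℝ => ∑ j ∈ Finset.range (n+1),
      ∑ k ∈ Finset.range (n+1), sterm α n j k ξ)
      (fun ξ : ℝ => ξ⁻¹ * dpProfile α n ξ ^ 2) (Set.Ioi (0:ℝ)) :=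
    fun ξ hξ => (integrand_eq α n hξ).symm
  refine ⟨hsumInt.congr_fun hToSum measurableSet_Ioi, ?_⟩
  have hIeq : ∫ ξ in Set.Ioi (0:ℝ), ξ⁻¹ * dpProfile α n ξ ^ 2
      = ∑ j ∈ Finset.range (n+1), ∑ k ∈ Finset.range (n+1),
          (lcoef α n j * 2^j) * (lcoef α n k * 2^k)
            * ((1/2:ℝ)^(α+j+k) * Real.Gamma (α+j+k)) := by
    rw [MeasureTheory.setIntegral_congr_fun measurableSet_Ioi
      (fun ξ hξ => integrand_eq α n hξ)]
    rw [MeasureTheory.integral_finset_sum _ (fun j _ => integrable_finset_sum _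
      (fun k _ => sterm_integrable α hα n j k))]
    refine Finset.sum_congr rfl (fun j _ => ?_)
    rw [MeasureTheory.integral_finset_sum _ (fun k _ => sterm_integrable α hα n j k)]
    exact Finset.sum_congr rfl (fun k _ => sterm_integral α hα n j k)
  rw [hIeq]
  have per : ∀ j ∈ Finset.range (n+1),
      ∑ k ∈ Finset.range (n+1), (lcoef α n j * 2^j) * (lcoef α n k * 2^k)
          * ((1/2:ℝ)^(α+j+k) * Real.Gamma (α+j+k))
        = (1/2:ℝ)^α * ∑ k ∈ Finset.range (n+1),
            lcoef α n j * lcoef α n k * Real.Gamma (α+j+k) := by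
    intro j _
    rw [Finset.mul_sum]
    refine Finset.sum_congr rfl (fun k _ => ?_)
    have h1 : (1/2:ℝ)^(α + (j:ℝ) + k) = (1/2:ℝ)^α * (1/2:ℝ)^(j:ℕ) * (1/2:ℝ)^(k:ℕ) := by
      rw [Real.rpow_add one_half_pos, Real.rpow_add one_half_pos,
        Real.rpow_natCast, Real.rpow_natCast]
    rw [h1]
    have h2 : (2:ℝ)^j * (1/2:ℝ)^j = 1 := by rw [← mul_pow]; norm_num
    have h3 : (2:ℝ)^k * (1/2:ℝ)^k = 1 := by rw [← mul_pow]; norm_num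
    calc (lcoef α n j * 2^j) * (lcoef α n k * 2^k)
          * ((1/2:ℝ)^α * (1/2:ℝ)^(j:ℕ) * (1/2:ℝ)^(k:ℕ) * Real.Gamma (α+j+k))
        = ((1/2:ℝ)^α * (lcoef α n j * lcoef α n k * Real.Gamma (α+j+k)))
            * (((2:ℝ)^j * (1/2:ℝ)^j) * ((2:ℝ)^k * (1/2:ℝ)^k)) := by ring
      _ = (1/2:ℝ)^α * (lcoef α n j * lcoef α n k * Real.Gamma (α+j+k)) := by
          rw [h2, h3]; ring
  rw [Finset.sum_congr rfl per, ← Finset.mul_sum, keysum hα n]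
  have hg : Real.Gamma (↑n + α + 1) = Real.Gamma (α + ↑n + 1) := by
    rw [show ((n:ℝ) + α + 1 : ℝ) = α + ↑n + 1 by ring]
  have hp2 : (1/2:ℝ)^α = ((2:ℝ)^α)⁻¹ := by
    rw [one_div, Real.inv_rpow (by norm_num : (0:ℝ) ≤ 2)]
  have h2α : ((2:ℝ)^α) ≠ 0 := (Real.rpow_pos_of_pos two_pos α).ne'
  have hnf : (n.factorial : ℝ) ≠ 0 := by positivity
  rw [hg, hp2]
  field_simp
end

section
/- For every real α > 0 and every natural number n, the ratio of the admissibility constant to the squared norm of the Daubechies–Paul mother wavelet is independent of n and equals the critical density bound of Theorem 2.1: 2π · (∫_0^∞ ξ^{-1} (ξ^{α/2} e^{-ξ} L_n^α(2ξ))² dξ) / (∫_0^∞ (ξ^{α/2} e^{-ξ} L_n^α(2ξ))² dξ) = 4π/α; that is, C_{ψ_n^α}/‖ψ_n^α‖² = 4π/α. -/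
open Real MeasureTheory

open Finset

private lemma prod_shift_sub (k : ℕ) (z : ℝ) :
    (∏ l ∈ range (k+1), (z + 1 + l)) - ∏ l ∈ range (k+1), (z + l)
      = (k + 1) * ∏ l ∈ range k, (z + 1 + l) := by
  rw [Finset.prod_range_succ, Finset.prod_range_succ' (fun l : ℕ => z + l) k]
  have h : ∀ l ∈ range k, (z + (↑(l + 1) : ℝ)) = z + 1 + l := by
    intro l _; push_cast; ring
  rw [Finset.prod_congr rfl h]
  ring

private lemma alt_sum_pascal (m : ℕ) (f : ℕ → ℝ) :
    ∑ j ∈ range (m + 2), (-1:ℝ)^j * ((m+1).choose j) * f j =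
    ∑ j ∈ range (m + 1), (-1:ℝ)^j * (m.choose j) * (f j - f (j+1)) := by
  set S1 := ∑ j ∈ range (m+1), (-1:ℝ)^j * (m.choose j) * f j with hS1
  set S2 := ∑ j ∈ range (m+1), (-1:ℝ)^j * (m.choose j) * f (j+1) with hS2
  set S3 := ∑ j ∈ range m, (-1:ℝ)^j * (m.choose (j+1)) * f (j+1) with hS3
  have ha : ∑ j ∈ range (m + 2), (-1:ℝ)^j * ((m+1).choose j) * f j
      = -S2 + -(∑ j ∈ range (m+1), (-1:ℝ)^j * (m.choose (j+1)) * f (j+1)) + f 0 := by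
    rw [Finset.sum_range_succ' (fun j => (-1:ℝ)^j * ((m+1).choose j) * f j) (m+1)]
    rw [hS2, ← Finset.sum_neg_distrib, ← Finset.sum_neg_distrib, ← Finset.sum_add_distrib]
    have : ∀ j ∈ range (m+1), (-1:ℝ)^(j+1) * ((m+1).choose (j+1)) * f (j+1)
        = -((-1:ℝ)^j * (m.choose j) * f (j+1)) + -((-1:ℝ)^j * (m.choose (j+1)) * f (j+1)) := by
      intro j _
      rw [Nat.choose_succ_succ]
      push_cast; ring
    rw [Finset.sum_congr rfl this]
    norm_num
  have hb : ∑ j ∈ range (m+1), (-1:ℝ)^j * (m.choose (j+1)) * f (j+1) = S3 := by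
    rw [Finset.sum_range_succ, Nat.choose_succ_self]
    simp [hS3]
  have hc : ∑ j ∈ range (m + 1), (-1:ℝ)^j * (m.choose j) * (f j - f (j+1)) = S1 - S2 := by
    rw [hS1, hS2, ← Finset.sum_sub_distrib]
    exact Finset.sum_congr rfl fun j _ => by ring
  have hd : S1 = -S3 + f 0 := by
    rw [hS1, Finset.sum_range_succ' (fun j => (-1:ℝ)^j * (m.choose j) * f j) m, hS3,
      ← Finset.sum_neg_distrib]
    have : ∀ j ∈ range m, (-1:ℝ)^(j+1) * (m.choose (j+1)) * f (j+1)
        = -((-1:ℝ)^j * (m.choose (j+1)) * f (j+1)) := by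
      intro j _; ring
    rw [Finset.sum_congr rfl this]
    norm_num
  rw [ha, hb, hc, hd]
  ring

private lemma alt_sum_prod_eq_zero : ∀ (k n : ℕ), k < n → ∀ (x : ℝ),
    ∑ j ∈ range (n+1), (-1:ℝ)^j * (n.choose j) * ∏ l ∈ range k, (x + j + l) = 0 := by
  intro k
  induction k with
  | zero =>
    intro n hn x
    simp only [range_zero, Finset.prod_empty, mul_one]
    have := Int.alternating_sum_range_choose (n := n)
    rw [if_neg hn.ne'] at this
    have h2 : ((∑ m ∈ range (n + 1), (-1:ℤ) ^ m * ↑(n.choose m) : ℤ) : ℝ) = 0 := by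
      rw [this]; norm_num
    push_cast at h2
    exact h2
  | succ k ih =>
    intro n hn x
    obtain ⟨m, rfl⟩ : ∃ m, n = m + 1 := ⟨n - 1, by omega⟩
    rw [show m + 1 + 1 = m + 2 from rfl, alt_sum_pascal]
    have key : ∀ j ∈ range (m+1),
        (-1:ℝ)^j * (m.choose j) * ((∏ l ∈ range (k+1), (x + j + l)) - ∏ l ∈ range (k+1), (x + (j+1:ℕ) + l))
        = -((k:ℝ)+1) * ((-1:ℝ)^j * (m.choose j) * ∏ l ∈ range k, ((x+1) + j + l)) := by
      intro j _
      have h1 : ∀ l ∈ range (k+1), (x + ((j+1:ℕ):ℝ) + l) = (x + j) + 1 + l := by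
        intro l _; push_cast; ring
      have h2 : ∀ l ∈ range (k+1), (x + (j:ℝ) + l) = (x + j) + l := by
        intro l _; ring
      have h3 : ∀ l ∈ range k, ((x+1) + (j:ℝ) + l) = (x + j) + 1 + l := by
        intro l _; ring
      rw [Finset.prod_congr rfl h1, Finset.prod_congr rfl h2, Finset.prod_congr rfl h3]
      linear_combination (-((-1:ℝ)^j * (m.choose j))) * prod_shift_sub k (x + (j:ℝ))
    rw [Finset.sum_congr rfl key, ← Finset.mul_sum, ih m (by omega) (x+1), mul_zero]

private noncomputable def lagC (β : ℝ) (j k : ℕ) : ℝ :=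
  (-1)^j * (-1)^k * (j.choose k) * ∏ l ∈ range k, (β - l)

private lemma lagC_zero_right (β : ℝ) (j : ℕ) : lagC β j 0 = (-1)^j := by
  simp [lagC]

private lemma lagC_top (β : ℝ) (j : ℕ) : lagC β j (j+1) = 0 := by
  simp [lagC, Nat.choose_succ_self]

private lemma lagC_succ (β : ℝ) (j k : ℕ) :
    lagC β (j+1) (k+1) = -(lagC β j (k+1)) + (β - k) * lagC β j k := by
  simp only [lagC, Nat.choose_succ_succ, Nat.cast_add, Finset.prod_range_succ, pow_succ]
  ring

private lemma iteratedDeriv_rodrigues (β : ℝ) (j : ℕ) :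
    ∀ t : ℝ, 0 < t → iteratedDeriv j (fun s : ℝ => Real.exp (-s) * s ^ β) t
      = Real.exp (-t) * ∑ k ∈ range (j+1), lagC β j k * t ^ (β - k) := by
  induction j with
  | zero =>
    intro t ht
    simp [lagC]
  | succ j ih =>
    intro t ht
    rw [iteratedDeriv_succ]
    have hev : (iteratedDeriv j fun s : ℝ => Real.exp (-s) * s ^ β) =ᶠ[nhds t]
        (fun t => Real.exp (-t) * ∑ k ∈ range (j+1), lagC β j k * t ^ (β - k)) := by
      filter_upwards [Ioi_mem_nhds ht] with s hs using ih s hs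
    rw [Filter.EventuallyEq.deriv_eq hev]
    have h1 : HasDerivAt (fun t : ℝ => Real.exp (-t)) (-Real.exp (-t)) t := by
      simpa using (hasDerivAt_neg t).exp
    have h2 : HasDerivAt (fun t : ℝ => ∑ k ∈ range (j+1), lagC β j k * t ^ (β - k))
        (∑ k ∈ range (j+1), lagC β j k * ((β - k) * t ^ (β - k - 1))) t :=
      HasDerivAt.fun_sum fun k _ =>
        (Real.hasDerivAt_rpow_const (Or.inl (ne_of_gt ht))).const_mul _
    have hd := h1.fun_mul h2
    rw [hd.deriv]
    -- algebra
    have key : ∑ k ∈ range (j+2), lagC β (j+1) k * t ^ (β - k) =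
        -∑ k ∈ range (j+1), lagC β j k * t ^ (β - k)
          + ∑ k ∈ range (j+1), lagC β j k * ((β - k) * t ^ (β - k - 1)) := by
      rw [Finset.sum_range_succ' (fun k => lagC β (j+1) k * t ^ (β - (k:ℝ))) (j+1)]
      have e1 : ∀ k ∈ range (j+1), lagC β (j+1) (k+1) * t ^ (β - ((k+1:ℕ):ℝ)) =
          -(lagC β j (k+1) * t ^ (β - ((k+1:ℕ):ℝ)))
            + lagC β j k * ((β - k) * t ^ (β - k - 1)) := by
        intro k _
        have hc : (β - ((k+1:ℕ):ℝ)) = β - k - 1 := by push_cast; ring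
        rw [hc, lagC_succ]; ring
      rw [Finset.sum_congr rfl e1, Finset.sum_add_distrib]
      have e2 : (∑ k ∈ range (j+1), -(lagC β j (k+1) * t ^ (β - ((k+1:ℕ):ℝ))))
          + lagC β (j+1) 0 * t ^ (β - ((0:ℕ):ℝ))
          = -∑ k ∈ range (j+1), lagC β j k * t ^ (β - k) := by
        have hcong : ∀ k ∈ range (j+1), -(lagC β j (k+1) * t ^ (β - ((k+1:ℕ):ℝ)))
            = (fun k : ℕ => -(lagC β j k * t ^ (β - (k:ℝ)))) (k+1) := fun k _ => rfl
        rw [Finset.sum_congr rfl hcong]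
        have h3 : lagC β (j+1) 0 * t ^ (β - ((0:ℕ):ℝ))
            = (fun k : ℕ => -(lagC β j k * t ^ (β - (k:ℝ)))) 0 := by
          simp only [lagC_zero_right]; ring
        rw [h3, ← Finset.sum_range_succ' (fun k : ℕ => -(lagC β j k * t ^ (β - (k:ℝ)))) (j+1),
          Finset.sum_range_succ, lagC_top]
        simp [Finset.sum_neg_distrib]
      calc (∑ k ∈ range (j+1), -(lagC β j (k+1) * t ^ (β - ((k+1:ℕ):ℝ)))
              + ∑ k ∈ range (j+1), lagC β j k * ((β - k) * t ^ (β - k - 1)))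
            + lagC β (j+1) 0 * t ^ (β - ((0:ℕ):ℝ))
          = ((∑ k ∈ range (j+1), -(lagC β j (k+1) * t ^ (β - ((k+1:ℕ):ℝ))))
              + lagC β (j+1) 0 * t ^ (β - ((0:ℕ):ℝ)))
            + ∑ k ∈ range (j+1), lagC β j k * ((β - k) * t ^ (β - k - 1)) := by ring
        _ = _ := by rw [e2]
    rw [key]
    ring

private noncomputable def lagB (α : ℝ) (n k : ℕ) : ℝ := lagC (α + n) n (n - k) / n.factorial

private lemma lag_eq_sum (α : ℝ) (n : ℕ) {t : ℝ} (ht : 0 < t) :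
    lag α n t = ∑ k ∈ range (n+1), lagB α n k * t ^ k := by
  rw [lag, iteratedDeriv_rodrigues (α + n) n t ht]
  rw [Finset.mul_sum, Finset.mul_sum]
  rw [← Finset.sum_range_reflect (fun k => lagB α n k * t ^ k) (n+1)]
  refine Finset.sum_congr rfl fun k hk => ?_
  rw [mem_range] at hk
  have hk' : k ≤ n := by omega
  have h1 : n + 1 - 1 - k = n - k := by omega
  have h2 : n - (n - k) = k := by omega
  rw [h1, lagB, h2]
  have hexp : Real.exp t * Real.exp (-t) = 1 := by rw [← Real.exp_add]; simp
  have h4 : t ^ (-α) * t ^ (α + (n:ℝ) - (k:ℝ)) = t ^ ((n - k : ℕ)) := by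
    rw [← Real.rpow_add ht, ← Real.rpow_natCast t (n-k)]
    congr 1
    rw [Nat.cast_sub hk']
    ring
  calc t ^ (-α) * Real.exp t / n.factorial
        * (Real.exp (-t) * (lagC (α + n) n k * t ^ (α + (n:ℝ) - k)))
      = (Real.exp t * Real.exp (-t)) * (lagC (α + n) n k / n.factorial)
        * (t ^ (-α) * t ^ (α + (n:ℝ) - k)) := by ring
    _ = lagC (α + n) n k / n.factorial * t ^ (n - k) := by rw [hexp, h4]; ring

private lemma lagB_eq (α : ℝ) (n j : ℕ) (hj : j ≤ n) :
    lagB α n j = (-1:ℝ)^j * (n.choose j)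
      * (∏ l ∈ range (n-j), (α + j + 1 + l)) / n.factorial := by
  rw [lagB, lagC]
  have hsign : (-1:ℝ)^n * (-1:ℝ)^(n-j) = (-1)^j := by
    have h1 : (-1:ℝ)^(n-j) * (-1)^j = (-1)^n := by
      rw [← pow_add, Nat.sub_add_cancel hj]
    have h2 : ((-1:ℝ)^(n-j)) * ((-1:ℝ)^(n-j)) = 1 := by
      rw [← pow_add]
      exact Even.neg_one_pow ⟨n-j, rfl⟩
    calc (-1:ℝ)^n * (-1:ℝ)^(n-j) = ((-1:ℝ)^(n-j) * (-1)^j) * (-1)^(n-j) := by rw [h1]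
      _ = (-1)^j * (((-1:ℝ)^(n-j)) * ((-1:ℝ)^(n-j))) := by ring
      _ = (-1)^j := by rw [h2]; ring
  have hch : n.choose (n - j) = n.choose j := Nat.choose_symm hj
  have hprod : ∏ l ∈ range (n-j), (α + (n:ℝ) - l) = ∏ l ∈ range (n-j), (α + j + 1 + l) := by
    rw [← Finset.prod_range_reflect (fun l => α + j + 1 + l) (n-j)]
    refine Finset.prod_congr rfl fun l hl => ?_
    rw [mem_range] at hl
    have hnat : j + 1 + (n - j - 1 - l) + l = n := by omega
    have hc : ((j:ℝ) + 1 + ((n - j - 1 - l : ℕ):ℝ)) + l = n := by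
      exact_mod_cast congrArg (Nat.cast : ℕ → ℝ) hnat
    have : ((n - j - 1 - l : ℕ):ℝ) = (n:ℝ) - j - 1 - l := by linarith
    rw [this]; ring
  rw [hch, hprod]
  linear_combination ((n.choose j : ℝ) * (∏ l ∈ range (n-j), (α + j + 1 + l))
    / (n.factorial : ℝ)) * hsign

private lemma Gamma_add_nat {x : ℝ} (hx : 0 < x) (m : ℕ) :
    Real.Gamma (x + m) = Real.Gamma x * ∏ l ∈ range m, (x + l) := by
  induction m with
  | zero => simp
  | succ m ih =>
    have h : x + ((m+1:ℕ):ℝ) = (x + m) + 1 := by push_cast; ring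
    have hpos : (0:ℝ) < x + m := by positivity
    rw [h, Real.Gamma_add_one hpos.ne', ih, Finset.prod_range_succ]
    ring

private lemma T_zero (α : ℝ) (hα : 0 < α) (n i : ℕ) (hi1 : 1 ≤ i) (hi2 : i ≤ n) :
    ∑ j ∈ range (n+1), lagB α n j * Real.Gamma (α + i + j) = 0 := by
  have h := alt_sum_prod_eq_zero (i-1) n (by omega) (α+1)
  calc ∑ j ∈ range (n+1), lagB α n j * Real.Gamma (α + i + j)
      = ∑ j ∈ range (n+1), (Real.Gamma (α+n+1)/n.factorial)
          * ((-1:ℝ)^j * (n.choose j) * ∏ l ∈ range (i-1), ((α+1) + j + l)) := by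
        refine Finset.sum_congr rfl fun j hj => ?_
        rw [mem_range] at hj
        have hjn : j ≤ n := by omega
        have hx : (0:ℝ) < α + j + 1 := by positivity
        have hG2 : Real.Gamma (α + i + j)
            = Real.Gamma (α + j + 1) * ∏ l ∈ range (i-1), (α + j + 1 + l) := by
          have harg : α + (i:ℝ) + j = (α + j + 1) + ((i-1:ℕ):ℝ) := by
            have : ((i-1:ℕ):ℝ) = (i:ℝ) - 1 := by
              rw [Nat.cast_sub hi1]; norm_num
            rw [this]; ring
          rw [harg, Gamma_add_nat hx]
        have hG1 : (∏ l ∈ range (n-j), (α + j + 1 + l)) * Real.Gamma (α + j + 1)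
            = Real.Gamma (α + n + 1) := by
          have harg : α + (n:ℝ) + 1 = (α + j + 1) + ((n-j:ℕ):ℝ) := by
            have : ((n-j:ℕ):ℝ) = (n:ℝ) - j := by rw [Nat.cast_sub hjn]
            rw [this]; ring
          rw [harg, Gamma_add_nat hx]
          ring
        have hprod : ∏ l ∈ range (i-1), (α + j + 1 + l)
            = ∏ l ∈ range (i-1), ((α+1) + j + l) :=
          Finset.prod_congr rfl fun l _ => by ring
        rw [lagB_eq α n j hjn, hG2, ← hprod]
        rw [div_mul_eq_mul_div, ← hG1]
        ring
    _ = 0 := by rw [← Finset.mul_sum, h, mul_zero]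

private lemma key_sum (α : ℝ) (hα : 0 < α) (n : ℕ) :
    ∑ i ∈ range (n+1), ∑ j ∈ range (n+1),
      lagB α n i * lagB α n j * ((i:ℝ) + j) * Real.Gamma (α + i + j) = 0 := by
  have hA : ∑ i ∈ range (n+1), ∑ j ∈ range (n+1),
      (i:ℝ) * (lagB α n i * lagB α n j * Real.Gamma (α + i + j)) = 0 := by
    refine Finset.sum_eq_zero fun i hi => ?_
    rw [mem_range] at hi
    rcases Nat.eq_zero_or_pos i with h0 | h1
    · subst h0; simp
    · have : ∑ j ∈ range (n+1), (i:ℝ) * (lagB α n i * lagB α n j * Real.Gamma (α + i + j))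
          = ((i:ℝ) * lagB α n i) * ∑ j ∈ range (n+1), lagB α n j * Real.Gamma (α + i + j) := by
        rw [Finset.mul_sum]
        exact Finset.sum_congr rfl fun j _ => by ring
      rw [this, T_zero α hα n i h1 (by omega), mul_zero]
  have hB : ∑ i ∈ range (n+1), ∑ j ∈ range (n+1),
      (j:ℝ) * (lagB α n i * lagB α n j * Real.Gamma (α + i + j)) = 0 := by
    rw [Finset.sum_comm]
    rw [← hA]
    refine Finset.sum_congr rfl fun i _ => Finset.sum_congr rfl fun j _ => ?_
    rw [show α + (j:ℝ) + i = α + i + j by ring]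
    ring
  calc ∑ i ∈ range (n+1), ∑ j ∈ range (n+1),
        lagB α n i * lagB α n j * ((i:ℝ) + j) * Real.Gamma (α + i + j)
      = ∑ i ∈ range (n+1), ∑ j ∈ range (n+1),
          ((i:ℝ) * (lagB α n i * lagB α n j * Real.Gamma (α + i + j))
            + (j:ℝ) * (lagB α n i * lagB α n j * Real.Gamma (α + i + j))) :=
        Finset.sum_congr rfl fun i _ => Finset.sum_congr rfl fun j _ => by ring
    _ = 0 := by
        rw [Finset.sum_congr rfl fun i _ => Finset.sum_add_distrib, Finset.sum_add_distrib,
          hA, hB, add_zero]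

private lemma integrable_aux {a : ℝ} (ha : 0 < a) :
    IntegrableOn (fun ξ : ℝ => ξ ^ (a - 1) * Real.exp (-(2 * ξ))) (Set.Ioi 0) := by
  have h := integrableOn_rpow_mul_exp_neg_mul_rpow (p := 1) (s := a - 1) (b := 2)
    (by linarith) one_pos two_pos
  refine h.congr_fun (fun x hx => ?_) measurableSet_Ioi
  beta_reduce
  rw [Real.rpow_one]
  ring_nf

private lemma dpProfile_sq_eq (α : ℝ) (hα : 0 < α) (n : ℕ) {ξ : ℝ} (hξ : 0 < ξ) :
    dpProfile α n ξ ^ 2 = ∑ i ∈ range (n+1), ∑ j ∈ range (n+1),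
      (lagB α n i * lagB α n j * 2^(i+j)) * (ξ ^ (α + i + j + 1 - 1) * Real.exp (-(2*ξ))) := by
  have h2ξ : (0:ℝ) < 2 * ξ := by linarith
  rw [dpProfile, lag_eq_sum α n h2ξ, mul_pow, mul_pow]
  have ha : (ξ^(α/2))^2 = ξ ^ α := by
    rw [← Real.rpow_natCast (ξ^(α/2)) 2, ← Real.rpow_mul hξ.le]
    norm_num
  have hb : (Real.exp (-ξ))^2 = Real.exp (-(2*ξ)) := by
    rw [pow_two, ← Real.exp_add]
    congr 1
    ring
  have hc : (∑ k ∈ range (n+1), lagB α n k * (2*ξ) ^ k)^2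
      = ∑ i ∈ range (n+1), ∑ j ∈ range (n+1),
          (lagB α n i * (2*ξ)^i) * (lagB α n j * (2*ξ)^j) := by
    rw [pow_two, Finset.sum_mul_sum]
  rw [ha, hb, hc, Finset.mul_sum]
  refine Finset.sum_congr rfl fun i _ => ?_
  rw [Finset.mul_sum]
  refine Finset.sum_congr rfl fun j _ => ?_
  have hpow : ξ ^ (α + i + j + 1 - 1) = ξ ^ α * ξ ^ (i:ℕ) * ξ ^ (j:ℕ) := by
    rw [show α + (i:ℝ) + j + 1 - 1 = α + i + j by ring, Real.rpow_add hξ, Real.rpow_add hξ,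
      Real.rpow_natCast, Real.rpow_natCast]
  rw [hpow, mul_pow, mul_pow, pow_add]
  ring

private lemma inv_dpProfile_sq_eq (α : ℝ) (hα : 0 < α) (n : ℕ) {ξ : ℝ} (hξ : 0 < ξ) :
    ξ⁻¹ * dpProfile α n ξ ^ 2 = ∑ i ∈ range (n+1), ∑ j ∈ range (n+1),
      (lagB α n i * lagB α n j * 2^(i+j)) * (ξ ^ (α + i + j - 1) * Real.exp (-(2*ξ))) := by
  rw [dpProfile_sq_eq α hα n hξ, Finset.mul_sum]
  refine Finset.sum_congr rfl fun i _ => ?_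
  rw [Finset.mul_sum]
  refine Finset.sum_congr rfl fun j _ => ?_
  have hpow : ξ⁻¹ * ξ ^ (α + i + j + 1 - 1) = ξ ^ (α + i + j - 1) := by
    rw [← Real.rpow_neg_one ξ, ← Real.rpow_add hξ]
    congr 1
    ring
  rw [← hpow]
  ring

private lemma integral_D (α : ℝ) (hα : 0 < α) (n : ℕ) :
    ∫ ξ in Set.Ioi (0:ℝ), dpProfile α n ξ ^ 2
      = ∑ i ∈ range (n+1), ∑ j ∈ range (n+1),
          (lagB α n i * lagB α n j * 2^(i+j))
            * ((1/2) ^ (α + i + j + 1) * Real.Gamma (α + i + j + 1)) := by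
  rw [setIntegral_congr_fun measurableSet_Ioi
    (fun ξ hξ => dpProfile_sq_eq α hα n (Set.mem_Ioi.mp hξ))]
  have hswap := MeasureTheory.integral_finset_sum (μ := volume.restrict (Set.Ioi 0))
    (range (n+1)) (f := fun i (x:ℝ) => ∑ j ∈ range (n+1),
      lagB α n i * lagB α n j * 2^(i+j) * (x ^ (α + i + j + 1 - 1) * Real.exp (-(2*x))))
    (fun i _ => integrable_finset_sum _
      (fun j _ => ((integrable_aux (a := α + i + j + 1) (by positivity)).const_mul _)))
  rw [hswap]
  refine Finset.sum_congr rfl fun i _ => ?_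
  have hswap2 := MeasureTheory.integral_finset_sum (μ := volume.restrict (Set.Ioi 0))
    (range (n+1)) (f := fun j (x:ℝ) =>
      lagB α n i * lagB α n j * 2^(i+j) * (x ^ (α + i + j + 1 - 1) * Real.exp (-(2*x))))
    (fun j _ => ((integrable_aux (a := α + i + j + 1) (by positivity)).const_mul _))
  rw [hswap2]
  refine Finset.sum_congr rfl fun j _ => ?_
  simp only [MeasureTheory.integral_const_mul]
  rw [Real.integral_rpow_mul_exp_neg_mul_Ioi (by positivity : (0:ℝ) < α + i + j + 1) two_pos]

private lemma integral_N (α : ℝ) (hα : 0 < α) (n : ℕ) :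
    ∫ ξ in Set.Ioi (0:ℝ), ξ⁻¹ * dpProfile α n ξ ^ 2
      = ∑ i ∈ range (n+1), ∑ j ∈ range (n+1),
          (lagB α n i * lagB α n j * 2^(i+j))
            * ((1/2) ^ (α + i + j) * Real.Gamma (α + i + j)) := by
  rw [setIntegral_congr_fun measurableSet_Ioi
    (fun ξ hξ => inv_dpProfile_sq_eq α hα n (Set.mem_Ioi.mp hξ))]
  have hswap := MeasureTheory.integral_finset_sum (μ := volume.restrict (Set.Ioi 0))
    (range (n+1)) (f := fun i (x:ℝ) => ∑ j ∈ range (n+1),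
      lagB α n i * lagB α n j * 2^(i+j) * (x ^ (α + i + j - 1) * Real.exp (-(2*x))))
    (fun i _ => integrable_finset_sum _
      (fun j _ => ((integrable_aux (a := α + i + j) (by positivity)).const_mul _)))
  rw [hswap]
  refine Finset.sum_congr rfl fun i _ => ?_
  have hswap2 := MeasureTheory.integral_finset_sum (μ := volume.restrict (Set.Ioi 0))
    (range (n+1)) (f := fun j (x:ℝ) =>
      lagB α n i * lagB α n j * 2^(i+j) * (x ^ (α + i + j - 1) * Real.exp (-(2*x))))
    (fun j _ => ((integrable_aux (a := α + i + j) (by positivity)).const_mul _))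
  rw [hswap2]
  refine Finset.sum_congr rfl fun j _ => ?_
  simp only [MeasureTheory.integral_const_mul]
  rw [Real.integral_rpow_mul_exp_neg_mul_Ioi (by positivity : (0:ℝ) < α + i + j) two_pos]

private lemma alpha_N_eq_two_D (α : ℝ) (hα : 0 < α) (n : ℕ) :
    α * (∫ ξ in Set.Ioi (0:ℝ), ξ⁻¹ * dpProfile α n ξ ^ 2)
      = 2 * ∫ ξ in Set.Ioi (0:ℝ), dpProfile α n ξ ^ 2 := by
  rw [integral_N α hα n, integral_D α hα n, ← sub_eq_zero]
  simp only [Finset.mul_sum]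
  rw [← Finset.sum_sub_distrib]
  have per : ∀ i ∈ range (n+1), ∀ j ∈ range (n+1),
      α * ((lagB α n i * lagB α n j * 2^(i+j)) * ((1/2:ℝ)^(α+i+j) * Real.Gamma (α+i+j)))
        - 2 * ((lagB α n i * lagB α n j * 2^(i+j))
            * ((1/2:ℝ)^(α+i+j+1) * Real.Gamma (α+i+j+1)))
      = -((1/2:ℝ)^α * (lagB α n i * lagB α n j * ((i:ℝ)+j) * Real.Gamma (α+i+j))) := by
    intro i _ j _
    have hpos : (0:ℝ) < α + i + j := by positivity
    have e4 : Real.Gamma (α+i+j+1) = (α+(i:ℝ)+j) * Real.Gamma (α+i+j) :=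
      Real.Gamma_add_one hpos.ne'
    have e5 : (1/2:ℝ)^(α+(i:ℝ)+j+1) = (1/2:ℝ)^(α+(i:ℝ)+j) * (1/2) := by
      rw [Real.rpow_add (by norm_num : (0:ℝ) < 1/2), Real.rpow_one]
    have e1 : (1/2:ℝ)^(α+(i:ℝ)+j) = (1/2)^α * (1/2:ℝ)^(i+j:ℕ) := by
      rw [← Real.rpow_natCast (1/2:ℝ) (i+j), ← Real.rpow_add (by norm_num : (0:ℝ) < 1/2)]
      congr 1; push_cast; ring
    have e3 : (2:ℝ)^(i+j) * (1/2:ℝ)^(i+j) = 1 := by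
      rw [← mul_pow]; norm_num
    rw [e4, e5, e1]
    linear_combination ((1/2:ℝ)^α * lagB α n i * lagB α n j * Real.Gamma (α+(i:ℝ)+j)
      * (α - (α+(i:ℝ)+j))) * e3
  have hcong : ∀ i ∈ range (n+1),
      (∑ j ∈ range (n+1),
        α * ((lagB α n i * lagB α n j * 2^(i+j)) * ((1/2:ℝ)^(α+i+j) * Real.Gamma (α+i+j))))
      - ∑ j ∈ range (n+1), 2 * ((lagB α n i * lagB α n j * 2^(i+j))
            * ((1/2:ℝ)^(α+i+j+1) * Real.Gamma (α+i+j+1)))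
      = -((1/2:ℝ)^α * ∑ j ∈ range (n+1),
          (lagB α n i * lagB α n j * ((i:ℝ)+j) * Real.Gamma (α+i+j))) := by
    intro i hi
    rw [← Finset.sum_sub_distrib, Finset.sum_congr rfl (fun j hj => per i hi j hj),
      Finset.mul_sum, ← Finset.sum_neg_distrib]
  rw [Finset.sum_congr rfl hcong, Finset.sum_neg_distrib, ← Finset.mul_sum,
    key_sum α hα n, mul_zero, neg_zero]

private lemma D_pos (α : ℝ) (hα : 0 < α) (n : ℕ) :
    0 < ∫ ξ in Set.Ioi (0:ℝ), dpProfile α n ξ ^ 2 := by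
  have hInt : IntegrableOn (fun ξ => dpProfile α n ξ ^ 2) (Set.Ioi 0) := by
    have h2 : IntegrableOn (fun ξ : ℝ => ∑ i ∈ range (n+1), ∑ j ∈ range (n+1),
        (lagB α n i * lagB α n j * 2^(i+j)) * (ξ ^ (α + i + j + 1 - 1) * Real.exp (-(2*ξ))))
        (Set.Ioi 0) :=
      integrable_finset_sum _ (fun i _ => integrable_finset_sum _
        (fun j _ => ((integrable_aux (a := α + i + j + 1) (by positivity)).const_mul _)))
    exact h2.congr_fun (fun ξ hξ => (dpProfile_sq_eq α hα n (Set.mem_Ioi.mp hξ)).symm)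
      measurableSet_Ioi
  rw [setIntegral_pos_iff_support_of_nonneg_ae
    (Filter.Eventually.of_forall fun x => sq_nonneg _) hInt]
  set pol : Polynomial ℝ := ∑ k ∈ range (n+1), Polynomial.C (lagB α n k) * Polynomial.X ^ k
    with hpol
  have hcoeff : pol.coeff n = lagB α n n := by
    rw [hpol, Polynomial.finset_sum_coeff]
    rw [Finset.sum_eq_single n]
    · simp
    · intro k _ hk
      simp [Polynomial.coeff_C_mul, Polynomial.coeff_X_pow, Ne.symm hk]
    · intro h
      exact absurd (self_mem_range_succ n) h
  have hBn : lagB α n n ≠ 0 := by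
    rw [lagB, Nat.sub_self, lagC_zero_right]
    positivity
  have hpol_ne : pol ≠ 0 := fun h => hBn (by rw [← hcoeff, h, Polynomial.coeff_zero])
  have hroots : {x : ℝ | pol.IsRoot x}.Finite := Polynomial.finite_setOf_isRoot hpol_ne
  have hZfin : ((fun ξ : ℝ => 2*ξ) ⁻¹' {x : ℝ | pol.IsRoot x}).Finite :=
    Set.Finite.preimage ((mul_right_injective₀ two_ne_zero).injOn) hroots
  have hZ0 : volume ((fun ξ : ℝ => 2*ξ) ⁻¹' {x : ℝ | pol.IsRoot x}) = 0 :=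
    hZfin.measure_zero volume
  have heval : ∀ ξ : ℝ, 0 < ξ → lag α n (2*ξ) = pol.eval (2*ξ) := by
    intro ξ hξ
    rw [lag_eq_sum α n (by linarith : (0:ℝ) < 2*ξ), hpol]
    simp [Polynomial.eval_finset_sum]
  have hsub : Set.Ioi (0:ℝ) ⊆ (Function.support (fun ξ => dpProfile α n ξ ^ 2) ∩ Set.Ioi 0)
      ∪ ((fun ξ : ℝ => 2*ξ) ⁻¹' {x : ℝ | pol.IsRoot x}) := by
    intro ξ hξ
    rw [Set.mem_Ioi] at hξ
    by_cases hr : pol.IsRoot (2*ξ)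
    · exact Or.inr hr
    · refine Or.inl ⟨Function.mem_support.mpr ?_, Set.mem_Ioi.mpr hξ⟩
      have hlag : lag α n (2*ξ) ≠ 0 := by
        rw [heval ξ hξ]
        exact hr
      have hdp : dpProfile α n ξ ≠ 0 := by
        rw [dpProfile]
        positivity
      exact pow_ne_zero 2 hdp
  by_contra hle
  push_neg at hle
  have h0 : volume (Function.support (fun ξ => dpProfile α n ξ ^ 2) ∩ Set.Ioi 0) = 0 :=
    le_antisymm hle zero_le
  have : volume (Set.Ioi (0:ℝ)) = 0 := by
    refine le_antisymm ?_ zero_le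
    calc volume (Set.Ioi (0:ℝ))
        ≤ volume ((Function.support (fun ξ => dpProfile α n ξ ^ 2) ∩ Set.Ioi 0)
            ∪ ((fun ξ : ℝ => 2*ξ) ⁻¹' {x : ℝ | pol.IsRoot x})) := measure_mono hsub
      _ ≤ volume (Function.support (fun ξ => dpProfile α n ξ ^ 2) ∩ Set.Ioi 0)
            + volume ((fun ξ : ℝ => 2*ξ) ⁻¹' {x : ℝ | pol.IsRoot x}) := measure_union_le _ _
      _ = 0 := by rw [h0, hZ0, add_zero]
  rw [Real.volume_Ioi] at this
  exact ENNReal.top_ne_zero this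

/-- The ratio `C_{ψ_n^α} / ‖ψ_n^α‖²` is independent of `n` and equals the critical
density bound `4π/α`. -/
theorem dp_critical_density (α : ℝ) (hα : 0 < α) (n : ℕ) :
    2 * π * (∫ ξ in Set.Ioi (0 : ℝ), ξ⁻¹ * dpProfile α n ξ ^ 2) /
        (∫ ξ in Set.Ioi (0 : ℝ), dpProfile α n ξ ^ 2) = 4 * π / α := by
  have hD := D_pos α hα n
  have hrel := alpha_N_eq_two_D α hα n
  rw [div_eq_div_iff hD.ne' hα.ne']
  linear_combination 2 * π * hrel
end
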